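/- Let X and Y be metric spaces, E and F nontrivial normed spaces, A(X,E) = C(X,E) or C_*(X,E), and A(Y,F) = C(Y,F) or C_*(Y,F). Let T: A(X,E) → A(Y,F) be a biseparating map, and suppose φ: X → Y is a homeomorphism and Φ: Y × E → F is a function such that Tf(y) = Φ(y, f(φ⁻¹(y))) for all f ∈ A(X,E) and all y ∈ Y. Then for every compact set K ⊆ Y', every f ∈ A(X,E) and every ε > 0, there exists δ > 0 such that for every g ∈ A(X,E) with ‖g − f‖_{φ⁻¹(K)} < δ one has ‖Tg − Tf‖_K < ε. -/

import Mathlib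

open Topology Filter Set ENNReal

namespace Stmt10

/-- The space of continuous functions, as a set of functions. -/
def Cset (X E : Type*) [TopologicalSpace X] [TopologicalSpace E] : Set (X → E) :=
  {f | Continuous f}

/-- The space of bounded continuous functions, as a set of functions. -/
def CbSet (X E : Type*) [TopologicalSpace X] [PseudoMetricSpace E] : Set (X → E) :=
  {f | Continuous f ∧ Bornology.IsBounded (Set.range f)}

/-- The set of accumulation points of a topological space. -/
def accPts (X : Type*) [TopologicalSpace X] : Set X := {x | 𝓝[≠] x ≠ ⊥}

/-- `T` is biseparating: a bijection such that `f, g` are disjoint with respect to `h`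
iff `Tf, Tg` are disjoint with respect to `Th`. -/
def Biseparating {X Y E F : Type*} {A : Set (X → E)} {B : Set (Y → F)} (T : A → B) : Prop :=
  Function.Bijective T ∧ ∀ f g h : A,
    ({x | (f : X → E) x ≠ (h : X → E) x} ∩ {x | (g : X → E) x ≠ (h : X → E) x} = ∅ ↔
      {y | (T f : Y → F) y ≠ (T h : Y → F) y} ∩ {y | (T g : Y → F) y ≠ (T h : Y → F) y} = ∅)

lemma memA_continuous {X E : Type*} [MetricSpace X] [NormedAddCommGroup E]
    {A : Set (X → E)} (hA : A = Cset X E ∨ A = CbSet X E) {f : X → E} (hf : f ∈ A) :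
    Continuous f := by
  rcases hA with rfl | rfl
  · exact hf
  · exact hf.1

lemma memA_add {X E : Type*} [MetricSpace X] [NormedAddCommGroup E]
    {A : Set (X → E)} (hA : A = Cset X E ∨ A = CbSet X E) {f : X → E} (hf : f ∈ A)
    {u : X → E} (hu : Continuous u) {M : ℝ} (hub : ∀ w, ‖u w‖ ≤ M) :
    (fun w => f w + u w) ∈ A := by
  rcases hA with rfl | rfl
  · exact (memA_continuous (Or.inl rfl) hf).add hu
  · refine ⟨hf.1.add hu, ?_⟩
    obtain ⟨C, hC⟩ := isBounded_iff_forall_norm_le.mp hf.2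
    refine isBounded_iff_forall_norm_le.mpr ⟨C + M, ?_⟩
    rintro v ⟨w, rfl⟩
    calc ‖f w + u w‖ ≤ ‖f w‖ + ‖u w‖ := norm_add_le _ _
      _ ≤ C + M := add_le_add (hC _ ⟨w, rfl⟩) (hub w)

lemma exists_glue {X : Type*} [MetricSpace X] {E : Type*} [NormedAddCommGroup E]
    [NormedSpace ℝ E]
    (x : X) (w : ℕ → X) (c : ℕ → E)
    (hpos : ∀ k, 0 < dist (w k) x)
    (hdec : ∀ k, dist (w (k+1)) x < dist (w k) x / 3)
    (hc : Tendsto c atTop (𝓝 0))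
    (M : ℝ) (hM : ∀ k, ‖c k‖ ≤ M) :
    ∃ u : X → E, Continuous u ∧ (∀ w', ‖u w'‖ ≤ M) ∧ (∀ k, u (w k) = c k) ∧ u x = 0 := by
  classical
  set d : ℕ → ℝ := fun k => dist (w k) x with hd
  have hdlt3 : ∀ k l, k < l → d l < d k / 3 := by
    intro k l hkl
    induction l with
    | zero => omega
    | succ m ih =>
      rcases Nat.lt_succ_iff_lt_or_eq.mp hkl with h | rfl
      · have := ih h
        have h2 := hdec m
        have := hpos k
        linarith
      · exact hdec k
  have hdlt : ∀ k l, k < l → d l < d k := by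
    intro k l hkl
    have := hdlt3 k l hkl
    have := hpos k
    simp only [hd] at *
    linarith
  set r : ℕ → ℝ := fun k => d k / 4 with hr
  have hrpos : ∀ k, 0 < r k := fun k => by have := hpos k; simp only [hr]; positivity
  have hrd : ∀ k, r k < d k := fun k => by have := hpos k; simp only [hr]; linarith
  -- disjointness
  have disj : ∀ (w' : X) (k l : ℕ), k ≠ l → dist w' (w k) < r k → dist w' (w l) < r l → False := by
    have key : ∀ (w' : X) (k l : ℕ), k < l → dist w' (w k) < r k → dist w' (w l) < r l → False := by
      intro w' k l hkl h1 h2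
      have t1 : d k ≤ dist (w k) (w l) + d l := dist_triangle (w k) (w l) x
      have t2 : dist (w k) (w l) ≤ dist w' (w k) + dist w' (w l) := dist_triangle_left _ _ _
      have t3 : d l < d k / 3 := hdlt3 k l hkl
      have hk := hpos k
      simp only [hr] at h1 h2
      linarith
    intro w' k l hkl h1 h2
    rcases hkl.lt_or_gt with h | h
    · exact key w' k l h h1 h2
    · exact key w' l k h h2 h1
  set ψ : ℕ → X → ℝ := fun k w' => max 0 (1 - dist w' (w k) / r k) with hψ
  have ψcont : ∀ k, Continuous (ψ k) := by
    intro k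
    exact continuous_const.max (continuous_const.sub ((continuous_id.dist continuous_const).div_const _))
  have ψnonneg : ∀ k w', 0 ≤ ψ k w' := fun k w' => le_max_left _ _
  have ψle : ∀ k w', ψ k w' ≤ 1 := by
    intro k w'
    have h1 : (0:ℝ) ≤ dist w' (w k) / r k := div_nonneg dist_nonneg (hrpos k).le
    simp only [hψ]
    rw [max_le_iff]
    constructor <;> linarith
  have ψzero : ∀ k w', r k ≤ dist w' (w k) → ψ k w' = 0 := by
    intro k w' h
    have : (1:ℝ) ≤ dist w' (w k) / r k := (one_le_div (hrpos k)).mpr h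
    simp only [hψ]
    rw [max_eq_left]; linarith
  have ψne : ∀ k w', ψ k w' ≠ 0 → dist w' (w k) < r k := by
    intro k w' h
    by_contra h'
    exact h (ψzero k w' (not_lt.mp h'))
  have ψself : ∀ k, ψ k (w k) = 1 := by
    intro k
    simp only [hψ, dist_self, zero_div, sub_zero]
    exact max_eq_right zero_le_one
  set u : X → E := fun w' =>
    if h : ∃ k, dist w' (w k) < r k then ψ h.choose w' • c h.choose else 0 with hu
  have huval : ∀ (w' : X) (k : ℕ), dist w' (w k) < r k → u w' = ψ k w' • c k := by
    intro w' k hk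
    have hex : ∃ j, dist w' (w j) < r j := ⟨k, hk⟩
    simp only [hu, dif_pos hex]
    obtain rfl : hex.choose = k := by
      by_contra hne
      exact disj w' hex.choose k hne hex.choose_spec hk
    rfl
  have huzero : ∀ w' : X, (∀ k, ¬ dist w' (w k) < r k) → u w' = 0 := by
    intro w' h
    simp only [hu]
    rw [dif_neg]
    rintro ⟨k, hk⟩
    exact h k hk
  have hu_wk : ∀ k, u (w k) = c k := by
    intro k
    have : dist (w k) (w k) < r k := by rw [dist_self]; exact hrpos k
    rw [huval (w k) k this, ψself, one_smul]
  have hu_x : u x = 0 := by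
    apply huzero
    intro k
    rw [dist_comm]
    exact not_lt.mpr (hrd k).le
  have hM0 : 0 ≤ M := le_trans (norm_nonneg (c 0)) (hM 0)
  have hbound : ∀ w', ‖u w'‖ ≤ M := by
    intro w'
    by_cases hex : ∃ k, dist w' (w k) < r k
    · obtain ⟨k, hk⟩ := hex
      rw [huval w' k hk, norm_smul, Real.norm_eq_abs, abs_of_nonneg (ψnonneg k w')]
      calc ψ k w' * ‖c k‖ ≤ 1 * M :=
            mul_le_mul (ψle k w') (hM k) (norm_nonneg _) zero_le_one
        _ = M := one_mul M
    · rw [huzero w' (fun k hk => hex ⟨k, hk⟩), norm_zero]; exact hM0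
  have hsum : ∀ (N : ℕ) (w' : X), (∀ k, dist w' (w k) < r k → k < N) →
      u w' = ∑ k ∈ Finset.range N, ψ k w' • c k := by
    intro N w' hN
    by_cases hex : ∃ k, dist w' (w k) < r k
    · obtain ⟨K, hK⟩ := hex
      rw [huval w' K hK]
      rw [Finset.sum_eq_single K]
      · intro b _ hb
        have : ψ b w' = 0 := by
          by_contra h
          exact disj w' b K hb (ψne b w' h) hK
        rw [this, zero_smul]
      · intro h
        exact absurd (Finset.mem_range.mpr (hN K hK)) h
    · push_neg at hex
      rw [huzero w' (fun k => not_lt.mpr (hex k) ∘ id)]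
      · symm
        apply Finset.sum_eq_zero
        intro k _
        rw [ψzero k w' (hex k), zero_smul]
  have hgeo : ∀ k, d k ≤ d 0 * (1/3)^k := by
    intro k
    induction k with
    | zero => simp
    | succ m ih =>
      have h1 := hdec m
      have : d (m+1) < d m / 3 := h1
      calc d (m+1) ≤ d m / 3 := this.le
        _ ≤ (d 0 * (1/3)^m) / 3 := by linarith
        _ = d 0 * (1/3)^(m+1) := by ring
  have hd0tend : Tendsto d atTop (𝓝 0) := by
    apply squeeze_zero (fun k => (hpos k).le) hgeo
    have := (tendsto_pow_atTop_nhds_zero_of_lt_one (by norm_num : (0:ℝ) ≤ 1/3)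
      (by norm_num : (1:ℝ)/3 < 1)).const_mul (d 0)
    simpa using this
  have hucont : Continuous u := by
    rw [continuous_iff_continuousAt]
    intro w0
    by_cases hw0 : w0 = x
    · subst hw0
      rw [Metric.continuousAt_iff]
      intro ε' hε'
      obtain ⟨N, hN⟩ := Filter.eventually_atTop.mp
        (NormedAddCommGroup.tendsto_nhds_zero.mp hc ε' hε')
      refine ⟨3 * d N / 4, by have := hpos N; positivity, ?_⟩
      intro a ha
      have hkey : ∀ k, dist a (w k) < r k → N ≤ k := by
        intro k hk
        by_contra h
        push_neg at h
        have h1 : d k ≤ dist (w k) a + dist a w0 := dist_triangle (w k) a w0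
        have h2 : d N < d k := hdlt k N h
        rw [dist_comm (w k) a] at h1
        simp only [hr] at hk
        linarith
      have : dist (u a) (u w0) = ‖u a‖ := by rw [hu_x, dist_zero_right]
      rw [this]
      by_cases hex : ∃ k, dist a (w k) < r k
      · obtain ⟨k, hk⟩ := hex
        rw [huval a k hk, norm_smul, Real.norm_eq_abs, abs_of_nonneg (ψnonneg k a)]
        calc ψ k a * ‖c k‖ ≤ 1 * ‖c k‖ :=
              mul_le_mul_of_nonneg_right (ψle k a) (norm_nonneg _)
          _ = ‖c k‖ := one_mul _
          _ < ε' := hN k (hkey k hk)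
      · rw [huzero a (fun k hk => hex ⟨k, hk⟩), norm_zero]; exact hε'
    · have hρ : 0 < dist w0 x / 2 := by
        have : 0 < dist w0 x := dist_pos.mpr hw0
        linarith
      set ρ := dist w0 x / 2 with hρdef
      obtain ⟨N, hN⟩ : ∃ N, ∀ k ≥ N, d k < ρ / 2 := by
        have := Filter.eventually_atTop.mp
          (hd0tend.eventually (eventually_lt_nhds (by linarith : (0:ℝ) < ρ/2)))
        exact this
      have hloc : ∀ w' ∈ Metric.ball w0 ρ, ∀ k, dist w' (w k) < r k → k < N := by
        intro w' hw' k hk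
        by_contra h
        push_neg at h
        have h1 : dist w0 x ≤ dist w0 w' + dist w' x := dist_triangle _ _ _
        have h2 : dist w' x ≤ dist w' (w k) + d k := dist_triangle _ _ _
        have h3 : d k < ρ / 2 := hN k h
        have h4 : dist w0 w' < ρ := by rw [dist_comm]; exact Metric.mem_ball.mp hw'
        simp only [hr] at hk
        have := hpos k
        linarith
      have hSeq : u =ᶠ[𝓝 w0] fun w' => ∑ k ∈ Finset.range N, ψ k w' • c k := by
        apply Filter.eventuallyEq_of_mem (Metric.ball_mem_nhds w0 hρ)
        intro w' hw'
        exact hsum N w' (hloc w' hw')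
      have hScont : Continuous fun w' => ∑ k ∈ Finset.range N, ψ k w' • c k :=
        continuous_finset_sum _ (fun k _ => (ψcont k).smul continuous_const)
      exact hScont.continuousAt.congr hSeq.symm
  exact ⟨u, hucont, hbound, hu_wk, hu_x⟩

lemma core {X Y E F : Type*} [MetricSpace X] [MetricSpace Y]
    [NormedAddCommGroup E] [NormedSpace ℝ E]
    [NormedAddCommGroup F] [NormedSpace ℝ F]
    (A : Set (X → E)) (hA : A = Cset X E ∨ A = CbSet X E)
    (B : Set (Y → F)) (hB : B = Cset Y F ∨ B = CbSet Y F)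
    (T : A → B) (φ : X ≃ₜ Y) (Φ : Y × E → F)
    (hrep : ∀ (f : A) (y : Y), (T f : Y → F) y = Φ (y, (f : X → E) (φ.symm y)))
    (f : A) (y : Y) (z : ℕ → Y) (c : ℕ → E) (η : ℝ) (hη : 0 < η)
    (hz : Tendsto z atTop (𝓝 y)) (hc : Tendsto c atTop (𝓝 0))
    (hzy : ∀ᶠ j in atTop, z j ≠ y)
    (hfar : ∀ᶠ j in atTop,
      η ≤ ‖Φ (z j, (f : X → E) (φ.symm (z j)) + c j) - (T f : Y → F) y‖) :
    False := by
  classical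
  obtain ⟨N0, hN0⟩ := Filter.eventually_atTop.mp (hzy.and hfar)
  set x : X := φ.symm y with hx
  set w : ℕ → X := fun j => φ.symm (z j) with hw
  set d : ℕ → ℝ := fun j => dist (w j) x with hd
  have hwx : ∀ j, N0 ≤ j → w j ≠ x := by
    intro j hj hjx
    exact (hN0 j hj).1 (φ.symm.injective hjx)
  have hdpos : ∀ j, N0 ≤ j → 0 < d j := fun j hj => dist_pos.mpr (hwx j hj)
  have hwtend : Tendsto w atTop (𝓝 x) := (φ.symm.continuous.tendsto y).comp hz
  have hdtend : Tendsto d atTop (𝓝 0) := tendsto_iff_dist_tendsto_zero.mp hwtend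
  -- construct the subsequence
  have key : ∀ m : {j // N0 ≤ j}, ∃ m' : {j // N0 ≤ j}, m.1 < m'.1 ∧ d m'.1 < d m.1 / 3 := by
    intro m
    have hpos : 0 < d m.1 / 3 := by have := hdpos m.1 m.2; linarith
    obtain ⟨N, hN⟩ := Filter.eventually_atTop.mp
      (hdtend.eventually (eventually_lt_nhds hpos))
    refine ⟨⟨max N (m.1 + 1), le_trans (le_trans m.2 (Nat.le_succ _)) (le_max_right _ _)⟩,
      ?_, hN _ (le_max_left _ _)⟩
    exact lt_of_lt_of_le (Nat.lt_succ_self _) (le_max_right _ _)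
  set τ : ℕ → {j // N0 ≤ j} := fun k => Nat.rec ⟨N0, le_rfl⟩ (fun _ p => (key p).choose) k
    with hτ
  set σ : ℕ → ℕ := fun k => (τ k).1 with hσ
  have hτsucc : ∀ k, σ k < σ (k+1) ∧ d (σ (k+1)) < d (σ k) / 3 := by
    intro k
    exact (key (τ k)).choose_spec
  have hσmono : StrictMono σ := strictMono_nat_of_lt_succ (fun k => (hτsucc k).1)
  have hσge : ∀ k, N0 ≤ σ k := fun k => (τ k).2
  -- glue
  obtain ⟨Mb, hMb⟩ : ∃ Mb, ∀ j, ‖c j‖ ≤ Mb := by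
    have hb : BddAbove (Set.range fun j => ‖c j‖) := (hc.norm.congr (by simp)).bddAbove_range
    obtain ⟨Mb, hMb⟩ := hb
    exact ⟨Mb, fun j => hMb ⟨j, rfl⟩⟩
  obtain ⟨u, hucont, hubound, huw, hux⟩ :=
    exists_glue x (w ∘ σ) (c ∘ σ)
      (fun k => hdpos (σ k) (hσge k))
      (fun k => (hτsucc k).2)
      (hc.comp hσmono.tendsto_atTop) Mb (fun k => hMb (σ k))
  have hmemH : (fun w' => (f : X → E) w' + u w') ∈ A := memA_add hA f.2 hucont hubound
  set H : A := ⟨fun w' => (f : X → E) w' + u w', hmemH⟩ with hH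
  have hTHcont : Continuous (T H : Y → F) := memA_continuous hB (T H).2
  have key1 : ∀ k, (T H : Y → F) (z (σ k)) =
      Φ (z (σ k), (f : X → E) (w (σ k)) + c (σ k)) := by
    intro k
    rw [hrep H (z (σ k))]
    have : (H : X → E) (φ.symm (z (σ k))) = (f : X → E) (w (σ k)) + c (σ k) := by
      show (f : X → E) (φ.symm (z (σ k))) + u (φ.symm (z (σ k))) = _
      have h1 : u ((w ∘ σ) k) = (c ∘ σ) k := huw k
      simp only [Function.comp] at h1
      show (f : X → E) (w (σ k)) + u (w (σ k)) = _
      rw [h1]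
    rw [this]
  have key2 : (T H : Y → F) y = (T f : Y → F) y := by
    rw [hrep H y, hrep f y]
    have : (H : X → E) (φ.symm y) = (f : X → E) (φ.symm y) := by
      show (f : X → E) (φ.symm y) + u (φ.symm y) = _
      rw [← hx, hux, add_zero]
    rw [this]
  have htend : Tendsto (fun k => (T H : Y → F) (z (σ k))) atTop (𝓝 ((T f : Y → F) y)) := by
    rw [← key2]
    exact (hTHcont.tendsto y).comp (hz.comp hσmono.tendsto_atTop)
  have hev : ∀ᶠ k in atTop, dist ((T H : Y → F) (z (σ k))) ((T f : Y → F) y) < η :=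
    (tendsto_iff_dist_tendsto_zero.mp htend).eventually (eventually_lt_nhds hη)
  obtain ⟨k, hk⟩ := hev.exists
  have hfark := (hN0 (σ k) (hσge k)).2
  rw [dist_eq_norm, key1 k] at hk
  exact absurd hfark (not_le.mpr hk)

/-- Automatic continuity: if `T` is a biseparating map between `C/C_*` spaces represented
by a homeomorphism `φ` and a section `Φ`, then for any compact `K ⊆ Y'`, `f` and `ε > 0`
there is `δ > 0` such that `‖g − f‖_{φ⁻¹(K)} < δ` implies `‖Tg − Tf‖_K < ε`. -/
theorem stmt10 {X Y E F : Type*} [MetricSpace X] [MetricSpace Y]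
    [NormedAddCommGroup E] [NormedSpace ℝ E] [Nontrivial E]
    [NormedAddCommGroup F] [NormedSpace ℝ F] [Nontrivial F]
    (A : Set (X → E)) (hA : A = Cset X E ∨ A = CbSet X E)
    (B : Set (Y → F)) (hB : B = Cset Y F ∨ B = CbSet Y F)
    (T : A → B) (hT : Biseparating T)
    (φ : X ≃ₜ Y) (Φ : Y × E → F)
    (hrep : ∀ (f : A) (y : Y), (T f : Y → F) y = Φ (y, (f : X → E) (φ.symm y))) :
    ∀ K : Set Y, K ⊆ accPts Y → IsCompact K → ∀ f : A, ∀ ε : ℝ, 0 < ε →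
      ∃ δ : ℝ, 0 < δ ∧ ∀ g : A,
        (⨆ y ∈ K, (‖(g : X → E) (φ.symm y) - (f : X → E) (φ.symm y)‖₊ : ℝ≥0∞))
            < ENNReal.ofReal δ →
        (⨆ y ∈ K, (‖(T g : Y → F) y - (T f : Y → F) y‖₊ : ℝ≥0∞)) < ENNReal.ofReal ε := by
  intro K hKacc hK f ε hε
  by_contra hcon
  push_neg at hcon
  have hmain : ∀ n : ℕ, ∃ g : A,
      (⨆ y ∈ K, (‖(g : X → E) (φ.symm y) - (f : X → E) (φ.symm y)‖₊ : ℝ≥0∞))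
          < ENNReal.ofReal (1/((n:ℝ)+1)) ∧
      ENNReal.ofReal ε ≤ (⨆ y ∈ K, (‖(T g : Y → F) y - (T f : Y → F) y‖₊ : ℝ≥0∞)) := by
    intro n
    obtain ⟨g, h1, h2⟩ := hcon (1/((n:ℝ)+1)) (by positivity)
    exact ⟨g, h1, h2⟩
  choose g hg1 hg2 using hmain
  have hpt : ∀ n : ℕ, ∃ yn, yn ∈ K ∧
      ENNReal.ofReal (ε/2) < (‖(T (g n) : Y → F) yn - (T f : Y → F) yn‖₊ : ℝ≥0∞) := by
    intro n
    have hlt : ENNReal.ofReal (ε/2) <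
        ⨆ y ∈ K, (‖(T (g n) : Y → F) y - (T f : Y → F) y‖₊ : ℝ≥0∞) :=
      lt_of_lt_of_le ((ENNReal.ofReal_lt_ofReal_iff hε).mpr (by linarith)) (hg2 n)
    rw [lt_iSup_iff] at hlt
    obtain ⟨yn, hyn⟩ := hlt
    rw [lt_iSup_iff] at hyn
    obtain ⟨hmem, hlt2⟩ := hyn
    exact ⟨yn, hmem, hlt2⟩
  choose y hyK hylt using hpt
  set c : ℕ → E := fun n => (g n : X → E) (φ.symm (y n)) - (f : X → E) (φ.symm (y n))
    with hcdef
  have hcnorm : ∀ n : ℕ, ‖c n‖ < 1/((n:ℝ)+1) := by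
    intro n
    have h1 : (‖c n‖₊ : ℝ≥0∞) ≤
        ⨆ v ∈ K, (‖(g n : X → E) (φ.symm v) - (f : X → E) (φ.symm v)‖₊ : ℝ≥0∞) :=
      le_iSup₂ (f := fun (v : Y) (_ : v ∈ K) =>
        (‖(g n : X → E) (φ.symm v) - (f : X → E) (φ.symm v)‖₊ : ℝ≥0∞)) (y n) (hyK n)
    have h2 := lt_of_le_of_lt h1 (hg1 n)
    rw [← enorm_eq_nnnorm, ← ofReal_norm] at h2
    exact (ENNReal.ofReal_lt_ofReal_iff_of_nonneg (norm_nonneg _)).mp h2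
  have hc0 : Tendsto c atTop (𝓝 0) := by
    rw [tendsto_zero_iff_norm_tendsto_zero]
    exact squeeze_zero (fun n => norm_nonneg _) (fun n => (hcnorm n).le)
      tendsto_one_div_add_atTop_nhds_zero_nat
  have hmemG : ∀ n : ℕ, (fun w' => (f : X → E) w' + c n) ∈ A := fun n =>
    memA_add hA f.2 continuous_const (fun _ => le_refl ‖c n‖)
  set G : ℕ → A := fun n => ⟨fun w' => (f : X → E) w' + c n, hmemG n⟩ with hG
  have hfar1 : ∀ n, ε/2 < ‖(T (G n) : Y → F) (y n) - (T f : Y → F) (y n)‖ := by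
    intro n
    have heq : (T (G n) : Y → F) (y n) = (T (g n) : Y → F) (y n) := by
      rw [hrep (G n), hrep (g n)]
      congr 2
      show (f : X → E) (φ.symm (y n)) + c n = (g n : X → E) (φ.symm (y n))
      rw [hcdef]
      exact add_sub_cancel _ _
    rw [heq]
    have h2 := hylt n
    rw [← enorm_eq_nnnorm, ← ofReal_norm] at h2
    exact (ENNReal.ofReal_lt_ofReal_iff_of_nonneg (by linarith)).mp h2
  obtain ⟨yb, hybK, σ, hσmono, hσtend⟩ := hK.tendsto_subseq hyK
  have hTf : Continuous (T f : Y → F) := memA_continuous hB (T f).2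
  have hchoose : ∀ n : ℕ, ∃ zn : Y, dist zn (y (σ n)) < 1/((n:ℝ)+1) ∧
      ‖(T (G (σ n)) : Y → F) zn - (T (G (σ n)) : Y → F) (y (σ n))‖ < ε/8 ∧ zn ≠ yb := by
    intro n
    have hTG : Continuous (T (G (σ n)) : Y → F) := memA_continuous hB (T (G (σ n))).2
    obtain ⟨ρ, hρpos, hρ⟩ := Metric.continuousAt_iff.mp
      (hTG.continuousAt (x := y (σ n))) (ε/8) (by linarith)
    have hne : (𝓝[≠] (y (σ n))).NeBot := Filter.neBot_iff.mpr (hKacc (hyK (σ n)))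
    have hmin : 0 < min ρ (1/((n:ℝ)+1)) := lt_min hρpos (by positivity)
    by_cases hpy : y (σ n) = yb
    · have hmem : Metric.ball (y (σ n)) (min ρ (1/((n:ℝ)+1))) ∈ 𝓝[≠] (y (σ n)) :=
        mem_nhdsWithin_of_mem_nhds (Metric.ball_mem_nhds _ hmin)
      obtain ⟨zn, hzball, hznep⟩ :=
        Filter.nonempty_of_mem (Filter.inter_mem hmem self_mem_nhdsWithin)
      have hd := Metric.mem_ball.mp hzball
      refine ⟨zn, lt_of_lt_of_le hd (min_le_right _ _), ?_, ?_⟩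
      · have := hρ (lt_of_lt_of_le hd (min_le_left _ _))
        rwa [dist_eq_norm] at this
      · rw [← hpy]; exact hznep
    · have hco : {yb}ᶜ ∈ 𝓝 (y (σ n)) :=
        (isOpen_compl_singleton).mem_nhds (by simpa using hpy)
      have hmem : (Metric.ball (y (σ n)) (min ρ (1/((n:ℝ)+1))) ∩ {yb}ᶜ) ∈ 𝓝[≠] (y (σ n)) :=
        mem_nhdsWithin_of_mem_nhds (Filter.inter_mem (Metric.ball_mem_nhds _ hmin) hco)
      obtain ⟨zn, ⟨hzball, hzc⟩, _⟩ :=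
        Filter.nonempty_of_mem (Filter.inter_mem hmem self_mem_nhdsWithin)
      have hd := Metric.mem_ball.mp hzball
      refine ⟨zn, lt_of_lt_of_le hd (min_le_right _ _), ?_, hzc⟩
      have := hρ (lt_of_lt_of_le hd (min_le_left _ _))
      rwa [dist_eq_norm] at this
  choose z hz1 hz2 hz3 using hchoose
  have hydist : Tendsto (fun n => dist (y (σ n)) yb) atTop (𝓝 0) := by
    have := tendsto_iff_dist_tendsto_zero.mp hσtend
    simpa [Function.comp] using this
  have hztend : Tendsto z atTop (𝓝 yb) := by
    rw [tendsto_iff_dist_tendsto_zero]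
    have hb : ∀ n, dist (z n) yb ≤ 1/((n:ℝ)+1) + dist (y (σ n)) yb := by
      intro n
      calc dist (z n) yb ≤ dist (z n) (y (σ n)) + dist (y (σ n)) yb := dist_triangle _ _ _
        _ ≤ 1/((n:ℝ)+1) + dist (y (σ n)) yb := by
            have := hz1 n; linarith
    have ht : Tendsto (fun n : ℕ => 1/((n:ℝ)+1) + dist (y (σ n)) yb) atTop (𝓝 0) := by
      have := tendsto_one_div_add_atTop_nhds_zero_nat.add hydist
      simpa using this
    exact squeeze_zero (fun n => dist_nonneg) hb ht
  have hTfev : ∀ᶠ n in atTop,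
      dist ((T f : Y → F) (y (σ n))) ((T f : Y → F) yb) < ε/8 := by
    have h1 : Tendsto (fun n => (T f : Y → F) (y (σ n))) atTop (𝓝 ((T f : Y → F) yb)) := by
      have := (hTf.tendsto yb).comp hσtend
      simpa [Function.comp_def] using this
    exact (tendsto_iff_dist_tendsto_zero.mp h1).eventually (eventually_lt_nhds (by linarith))
  have hfar : ∀ᶠ n in atTop,
      ε/4 ≤ ‖Φ (z n, (f : X → E) (φ.symm (z n)) + c (σ n)) - (T f : Y → F) yb‖ := by
    filter_upwards [hTfev] with n hn
    have e1 : Φ (z n, (f : X → E) (φ.symm (z n)) + c (σ n)) = (T (G (σ n)) : Y → F) (z n) :=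
      (hrep (G (σ n)) (z n)).symm
    rw [e1]
    have t4 : dist ((T (G (σ n)) : Y → F) (y (σ n))) ((T f : Y → F) (y (σ n))) ≤
        dist ((T (G (σ n)) : Y → F) (y (σ n))) ((T (G (σ n)) : Y → F) (z n)) +
        dist ((T (G (σ n)) : Y → F) (z n)) ((T f : Y → F) yb) +
        dist ((T f : Y → F) yb) ((T f : Y → F) (y (σ n))) := dist_triangle4 _ _ _ _
    have h1 : ε/2 < dist ((T (G (σ n)) : Y → F) (y (σ n))) ((T f : Y → F) (y (σ n))) := by
      rw [dist_eq_norm]; exact hfar1 (σ n)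
    have h2 : dist ((T (G (σ n)) : Y → F) (y (σ n))) ((T (G (σ n)) : Y → F) (z n)) < ε/8 := by
      rw [dist_comm, dist_eq_norm]; exact hz2 n
    have h3 : dist ((T f : Y → F) yb) ((T f : Y → F) (y (σ n))) < ε/8 := by
      rw [dist_comm]; exact hn
    have h4 : ε/4 ≤ dist ((T (G (σ n)) : Y → F) (z n)) ((T f : Y → F) yb) := by linarith
    rwa [dist_eq_norm] at h4
  exact core A hA B hB T φ Φ hrep f yb z (fun n => c (σ n)) (ε/4) (by linarith) hztend
    (hc0.comp hσmono.tendsto_atTop) (Filter.Eventually.of_forall hz3) hfar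


end Stmt10
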